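/- Let m ∈ ℕ, n = 2m+1, and let s : Fin n → ℝ. Define the median med(s) as the (m+1)-th smallest value of s, i.e., med(s) = (s ∘ σ) m for any permutation σ of Fin n such that s ∘ σ is monotone. Let k ∈ Fin n and let s̃ : Fin n → ℝ satisfy s̃ j = s j for every j ≠ k. If either ( s k < med(s) and s̃ k < med(s) ) or ( s k > med(s) and s̃ k > med(s) ), then med(s̃) = med(s). -/

import Mathlib

private lemma card_filter_perm {n : ℕ} (σ : Equiv.Perm (Fin n)) (P : Fin n → Prop)
    [DecidablePred P] :
    (Finset.univ.filter fun i => P (σ i)).card = (Finset.univ.filter P).card :=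
  Finset.card_bij (fun i _ => σ i) (by simp) (fun a _ b _ h => σ.injective h)
    (fun b hb => ⟨σ.symm b, by simpa using hb⟩)

/-- Median invariance under same-side changes: if `s̃` agrees with `s` except at `k`,
and both `s k` and `s̃ k` lie strictly on the same side of the median of `s`, then the
median is unchanged. Here the median of a `(2m+1)`-tuple is its `(m+1)`-th smallest
value, obtained via any sorting permutation. -/
theorem stmt_15 (m : ℕ) (s st : Fin (2 * m + 1) → ℝ) (k : Fin (2 * m + 1))
    (hst : ∀ j, j ≠ k → st j = s j)
    (σ σ' : Equiv.Perm (Fin (2 * m + 1)))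
    (hσ : Monotone (s ∘ σ)) (hσ' : Monotone (st ∘ σ'))
    (hside :
      (s k < s (σ ⟨m, by omega⟩) ∧ st k < s (σ ⟨m, by omega⟩)) ∨
      (s k > s (σ ⟨m, by omega⟩) ∧ st k > s (σ ⟨m, by omega⟩))) :
    st (σ' ⟨m, by omega⟩) = s (σ ⟨m, by omega⟩) := by
  set mid : Fin (2 * m + 1) := ⟨m, by omega⟩ with hmid
  set M : ℝ := s (σ mid) with hM
  set M' : ℝ := st (σ' mid) with hM'
  -- counting bounds for s
  have h1 : (Finset.univ.filter fun j => s j < M).card ≤ m := by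
    calc (Finset.univ.filter fun j => s j < M).card
        ≤ (Finset.Iio mid).card := by
          apply Finset.card_le_card_of_injOn σ.symm
          · intro j hj
            simp only [Finset.mem_coe, Finset.mem_filter] at hj
            simp only [Finset.mem_coe, Finset.mem_Iio]
            by_contra h
            push_neg at h
            have := hσ h
            simp only [Function.comp_apply, Equiv.apply_symm_apply] at this
            exact absurd hj.2 (not_lt.mpr this)
          · exact fun a _ b _ h => σ.symm.injective h
      _ = m := Fin.card_Iio mid
  have h2 : (Finset.univ.filter fun j => M < s j).card ≤ m := by
    calc (Finset.univ.filter fun j => M < s j).card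
        ≤ (Finset.Ioi mid).card := by
          apply Finset.card_le_card_of_injOn σ.symm
          · intro j hj
            simp only [Finset.mem_coe, Finset.mem_filter] at hj
            simp only [Finset.mem_coe, Finset.mem_Ioi]
            by_contra h
            push_neg at h
            have := hσ h
            simp only [Function.comp_apply, Equiv.apply_symm_apply] at this
            exact absurd hj.2 (not_lt.mpr this)
          · exact fun a _ b _ h => σ.symm.injective h
      _ = m := by rw [Fin.card_Ioi]; simp only [hmid]; omega
  -- st has the same counts
  have hlt : (Finset.univ.filter fun j => st j < M) = Finset.univ.filter fun j => s j < M := by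
    ext j
    simp only [Finset.mem_filter, Finset.mem_univ, true_and]
    by_cases hjk : j = k
    · subst hjk
      rcases hside with ⟨h₁, h₂⟩ | ⟨h₁, h₂⟩
      · simp [h₁, h₂]
      · constructor <;> intro h <;> [exact absurd h (not_lt.mpr h₂.le); exact absurd h (not_lt.mpr h₁.le)]
    · rw [hst j hjk]
  have hgt : (Finset.univ.filter fun j => M < st j) = Finset.univ.filter fun j => M < s j := by
    ext j
    simp only [Finset.mem_filter, Finset.mem_univ, true_and]
    by_cases hjk : j = k
    · subst hjk
      rcases hside with ⟨h₁, h₂⟩ | ⟨h₁, h₂⟩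
      · constructor <;> intro h <;> [exact absurd h (not_lt.mpr h₂.le); exact absurd h (not_lt.mpr h₁.le)]
      · simp [h₁, h₂]
    · rw [hst j hjk]
  rcases lt_trichotomy M' M with h | h | h
  · exfalso
    have hsub : Finset.Iic mid ⊆ Finset.univ.filter fun i => st (σ' i) < M := by
      intro i hi
      simp only [Finset.mem_Iic] at hi
      simp only [Finset.mem_filter, Finset.mem_univ, true_and]
      exact lt_of_le_of_lt (hσ' hi) h
    have := Finset.card_le_card hsub
    rw [Fin.card_Iic, card_filter_perm σ' (fun j => st j < M), hlt] at this
    simp only [hmid] at this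
    omega
  · exact h
  · exfalso
    have hsub : Finset.Ici mid ⊆ Finset.univ.filter fun i => M < st (σ' i) := by
      intro i hi
      simp only [Finset.mem_Ici] at hi
      simp only [Finset.mem_filter, Finset.mem_univ, true_and]
      exact lt_of_lt_of_le h (hσ' hi)
    have := Finset.card_le_card hsub
    rw [Fin.card_Ici, card_filter_perm σ' (fun j => M < st j), hgt] at this
    simp only [hmid] at this
    omega
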